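/- Let T be a tree on p vertices with k pendant (degree-1) vertices and diameter d. Then 2·W_ε(T) ≤ k·ε*(T) + d·k·(p−k−1) − k·(p−k). Equality holds if T is the star K_{1,p−1}. -/

import Mathlib

open Finset

namespace EccPaper

variable {V : Type*}

noncomputable def ecc [Fintype V] (G : SimpleGraph V) (v : V) : ℕ :=
  Finset.univ.sup (fun u => G.dist v u)

noncomputable def graphDiam [Fintype V] (G : SimpleGraph V) : ℕ :=
  Finset.univ.sup (fun v => ecc G v)

noncomputable def eccMatR [Fintype V] (G : SimpleGraph V) : Matrix V V ℝ :=
  fun u v => if G.dist u v = min (ecc G u) (ecc G v) then (G.dist u v : ℝ) else 0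

noncomputable def eccWiener [Fintype V] (G : SimpleGraph V) : ℝ :=
  (∑ u, ∑ v, eccMatR G u v) / 2

noncomputable def totalEcc [Fintype V] (G : SimpleGraph V) : ℝ :=
  ∑ v, (ecc G v : ℝ)

noncomputable def eccConnIndex [Fintype V] (G : SimpleGraph V) [DecidableRel G.Adj] : ℝ :=
  ∑ v, (G.degree v : ℝ) * (ecc G v : ℝ)

lemma eccMatR_isHermitian [Fintype V] (G : SimpleGraph V) : (eccMatR G).IsHermitian := by
  ext i j
  simp only [eccMatR, Matrix.conjTranspose_apply, starRingEnd_apply, star_trivial]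
  rw [SimpleGraph.dist_comm, min_comm]

noncomputable def eccEnergy [Fintype V] [DecidableEq V] (G : SimpleGraph V) : ℝ :=
  ∑ i, |(eccMatR_isHermitian G).eigenvalues i|

noncomputable def eccSpecRadius [Fintype V] [DecidableEq V] (G : SimpleGraph V) : ℝ :=
  ⨆ i, |(eccMatR_isHermitian G).eigenvalues i|

def eccGraph [Fintype V] (G : SimpleGraph V) : SimpleGraph V where
  Adj u v := u ≠ v ∧ G.dist u v = min (ecc G u) (ecc G v)
  symm := ⟨by
    rintro u v ⟨h1, h2⟩
    exact ⟨h1.symm, by rwa [SimpleGraph.dist_comm, min_comm]⟩⟩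
  loopless := ⟨fun v h => h.1 rfl⟩

def IsIrreducible [Fintype V] (M : Matrix V V ℝ) : Prop :=
  ¬ ∃ S : Set V, S.Nonempty ∧ S ≠ Set.univ ∧ ∀ i ∈ S, ∀ j ∉ S, M i j = 0

def centralGraph [DecidableEq V] (G : SimpleGraph V) [DecidableRel G.Adj] :
    SimpleGraph (V ⊕ G.edgeSet) where
  Adj x y :=
    match x, y with
    | Sum.inl u, Sum.inl v => u ≠ v ∧ ¬ G.Adj u v
    | Sum.inl u, Sum.inr e => u ∈ (e : Sym2 V)
    | Sum.inr e, Sum.inl u => u ∈ (e : Sym2 V)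
    | Sum.inr _, Sum.inr _ => False
  symm := ⟨by
    rintro (u | e) (v | f) h
    · exact ⟨h.1.symm, fun hadj => h.2 hadj.symm⟩
    · exact h
    · exact h
    · exact h⟩
  loopless := ⟨by
    rintro (u | e) h
    · exact h.1 rfl
    · exact h⟩


section Aux
open SimpleGraph
set_option linter.unusedSectionVars false
set_option maxHeartbeats 1000000

lemma dist_le_ecc [Fintype V] (G : SimpleGraph V) (u v : V) : G.dist u v ≤ ecc G u :=
  Finset.le_sup (Finset.mem_univ v)

lemma ecc_le_diam [Fintype V] (G : SimpleGraph V) (u : V) : ecc G u ≤ graphDiam G :=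
  Finset.le_sup (Finset.mem_univ u)

lemma leaf_of_ecc_dist [Fintype V] [DecidableEq V] {T : SimpleGraph V} [DecidableRel T.Adj]
    (ht : T.IsTree) {u v : V} (hne : v ≠ u) (h : T.dist u v = ecc T u) : T.degree v = 1 := by
  have hconn := ht.isConnected
  have hm1 : 1 ≤ T.dist u v := hconn.pos_dist_of_ne (Ne.symm hne)
  obtain ⟨r, hrp, hrl⟩ := (hconn u v).exists_path_of_dist
  -- every neighbor x of v satisfies dist u x + 1 = dist u v, and the concat path is THE path
  have key : ∀ x (hx : T.Adj v x), ∃ (p : T.Walk u x) (hp : (p.concat hx.symm).IsPath),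
      p.concat hx.symm = r := by
    intro x hx
    have hle : T.dist u x ≤ T.dist u v := h ▸ dist_le_ecc T u x
    have hxv : T.dist x v = 1 := dist_eq_one_iff_adj.mpr hx.symm
    have hge : T.dist u v ≤ T.dist u x + 1 := by
      have := hconn.dist_triangle (u := u) (v := x) (w := v)
      omega
    obtain ⟨p, hpp, hpl⟩ := (hconn u x).exists_path_of_dist
    have hvns : v ∉ p.support := by
      intro hv
      obtain ⟨q1, q2, rfl⟩ := Walk.mem_support_iff_exists_append.mp hv
      have h1 := SimpleGraph.dist_le q1
      have h2 : 1 ≤ T.dist v x := hconn.pos_dist_of_ne (hx.ne)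
      have h3 := SimpleGraph.dist_le q2
      rw [Walk.length_append] at hpl
      omega
    have hq : (p.concat hx.symm).IsPath := by
      rw [← Walk.isPath_reverse_iff, Walk.reverse_concat]
      exact hpp.reverse.cons (by simpa [Walk.support_reverse] using hvns)
    have huniq := ht.IsAcyclic.path_unique ⟨p.concat hx.symm, hq⟩ ⟨r, hrp⟩
    exact ⟨p, hq, congrArg Subtype.val huniq⟩
  -- v has a neighbor
  have hnil : ¬ r.reverse.Nil := Walk.not_nil_of_ne hne
  have hx0 : T.Adj v (r.reverse.getVert 1) := r.reverse.adj_snd hnil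
  have huniq : ∀ x y, T.Adj v x → T.Adj v y → x = y := by
    intro x y hx hy
    obtain ⟨p, hp, hpe⟩ := key x hx
    obtain ⟨q, hq, hqe⟩ := key y hy
    obtain ⟨hv, -⟩ := Walk.concat_inj (hpe.trans hqe.symm)
    exact hv
  have : T.neighborFinset v = {r.reverse.getVert 1} := by
    ext w
    simp only [mem_neighborFinset, Finset.mem_singleton]
    exact ⟨fun hw => huniq w _ hw hx0, fun hw => hw ▸ hx0⟩
  rw [SimpleGraph.degree, this, Finset.card_singleton]

variable [Fintype V] [DecidableEq V] {T : SimpleGraph V} [DecidableRel T.Adj]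

lemma eccMatR_diag (u : V) : eccMatR T u u = 0 := by
  unfold eccMatR; split <;> simp

lemma eccMatR_nonneg (u v : V) : 0 ≤ eccMatR T u v := by
  unfold eccMatR; split <;> positivity

lemma eccMatR_le_ecc (u v : V) : eccMatR T u v ≤ (ecc T u : ℝ) := by
  unfold eccMatR; split
  · exact_mod_cast dist_le_ecc T u v
  · positivity

lemma eccMatR_eq_zero_of_nonleaf (ht : T.IsTree) {u v : V} (hu : T.degree u ≠ 1)
    (hv : T.degree v ≠ 1) : eccMatR T u v = 0 := by
  by_cases he : u = v
  · subst he; exact eccMatR_diag u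
  · unfold eccMatR
    rw [if_neg]
    intro hcond
    rcases min_cases (ecc T u) (ecc T v) with ⟨hmin, -⟩ | ⟨hmin, -⟩
    · exact hv (leaf_of_ecc_dist ht (Ne.symm he) (hmin ▸ hcond))
    · rw [hmin] at hcond
      rw [SimpleGraph.dist_comm] at hcond
      exact hu (leaf_of_ecc_dist ht he hcond)

lemma eccMatR_le_ecc_sub_one (ht : T.IsTree) {u v : V} (h1 : 1 ≤ ecc T u)
    (hv : T.degree v ≠ 1) : eccMatR T u v ≤ (ecc T u : ℝ) - 1 := by
  have h1' : (1:ℝ) ≤ (ecc T u : ℝ) := by exact_mod_cast h1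
  by_cases he : u = v
  · subst he; rw [eccMatR_diag]; linarith
  · unfold eccMatR; split
    · rename_i hcond
      have hdne : T.dist u v ≠ ecc T u := fun hd =>
        hv (leaf_of_ecc_dist ht (Ne.symm he) hd)
      have hdle : T.dist u v ≤ ecc T u := dist_le_ecc T u v
      have : T.dist u v + 1 ≤ ecc T u := by omega
      have : ((T.dist u v : ℝ)) + 1 ≤ (ecc T u : ℝ) := by exact_mod_cast this
      linarith
    · linarith


lemma ecc_pos_of_leaf (hu : T.degree u = 1) : 1 ≤ ecc T u := by
  have : 0 < T.degree u := by omega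
  rw [← SimpleGraph.card_neighborFinset_eq_degree, Finset.card_pos] at this
  obtain ⟨x, hx⟩ := this
  rw [mem_neighborFinset] at hx
  calc 1 = T.dist u x := (dist_eq_one_iff_adj.mpr hx).symm
  _ ≤ ecc T u := dist_le_ecc T u x

lemma main_ineq (ht : T.IsTree) :
    (∑ u, ∑ v, eccMatR T u v) ≤
      ((Finset.univ.filter (fun v : V => T.degree v = 1)).card : ℝ) * totalEcc T +
      (graphDiam T : ℝ) * ((Finset.univ.filter (fun v : V => T.degree v = 1)).card : ℝ) *
        ((Fintype.card V : ℝ) - ((Finset.univ.filter (fun v : V => T.degree v = 1)).card : ℝ) - 1) -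
      ((Finset.univ.filter (fun v : V => T.degree v = 1)).card : ℝ) *
        ((Fintype.card V : ℝ) - ((Finset.univ.filter (fun v : V => T.degree v = 1)).card : ℝ)) := by
  classical
  set P := Finset.univ.filter (fun v : V => T.degree v = 1) with hPdef
  set Q := Finset.univ.filter (fun v : V => ¬ (T.degree v = 1)) with hQdef
  set k := P.card with hk
  set p := Fintype.card V with hp
  have hkp : k ≤ p := by
    simpa using Finset.card_filter_le Finset.univ (fun v : V => T.degree v = 1)
  have hQcard : Q.card = p - k := by
    have h := Finset.card_filter_add_card_filter_not (s := (Finset.univ : Finset V))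
      (p := fun v : V => T.degree v = 1)
    rw [Finset.card_univ, ← hp, ← hPdef, ← hQdef, ← hk] at h
    omega
  have hQcast : (Q.card : ℝ) = (p : ℝ) - (k : ℝ) := by
    rw [hQcard]; exact Nat.cast_sub hkp
  set S : ℝ := ∑ u ∈ P, (ecc T u : ℝ) with hS
  set S' : ℝ := ∑ u ∈ Q, (ecc T u : ℝ) with hS'
  have hE : totalEcc T = S + S' := by
    rw [totalEcc, hS, hS']
    exact (Finset.sum_filter_add_sum_filter_not _ _ _).symm
  set d := graphDiam T with hd
  -- row bounds
  have hrow : ∀ u : V, (∑ v, eccMatR T u v) ≤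
      (if T.degree u = 1 then ((k:ℝ)-1) * (ecc T u : ℝ) + ((p:ℝ)-(k:ℝ)) * ((ecc T u : ℝ)-1)
       else (k:ℝ) * (ecc T u : ℝ)) := by
    intro u
    rw [← Finset.sum_filter_add_sum_filter_not Finset.univ (fun v => T.degree v = 1)]
    by_cases hu : T.degree u = 1
    · rw [if_pos hu]
      have huP : u ∈ P := by simp [hPdef, hu]
      have h1 : (∑ v ∈ P, eccMatR T u v) ≤ ((k:ℝ)-1) * (ecc T u : ℝ) := by
        rw [← Finset.add_sum_erase _ _ huP, eccMatR_diag, zero_add]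
        calc (∑ v ∈ P.erase u, eccMatR T u v) ≤ ∑ v ∈ P.erase u, (ecc T u : ℝ) :=
              Finset.sum_le_sum (fun v _ => eccMatR_le_ecc u v)
        _ = ((P.erase u).card : ℝ) * (ecc T u : ℝ) := by rw [Finset.sum_const, nsmul_eq_mul]
        _ = ((k:ℝ)-1) * (ecc T u : ℝ) := by
            rw [Finset.card_erase_of_mem huP]
            have hk1 : 1 ≤ k := Finset.card_pos.mpr ⟨u, huP⟩
            rw [Nat.cast_sub hk1, Nat.cast_one]
      have h2 : (∑ v ∈ Q, eccMatR T u v) ≤ ((p:ℝ)-(k:ℝ)) * ((ecc T u : ℝ)-1) := by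
        calc (∑ v ∈ Q, eccMatR T u v) ≤ ∑ v ∈ Q, ((ecc T u : ℝ)-1) :=
              Finset.sum_le_sum (fun v hv => by
                rw [hQdef, Finset.mem_filter] at hv
                exact eccMatR_le_ecc_sub_one ht (ecc_pos_of_leaf hu) hv.2)
        _ = ((p:ℝ)-(k:ℝ)) * ((ecc T u : ℝ)-1) := by
              rw [Finset.sum_const, nsmul_eq_mul, hQcast]
      exact add_le_add h1 h2
    · rw [if_neg hu]
      have h2 : (∑ v ∈ Q, eccMatR T u v) = 0 := by
        apply Finset.sum_eq_zero
        intro v hv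
        rw [hQdef, Finset.mem_filter] at hv
        exact eccMatR_eq_zero_of_nonleaf ht hu hv.2
      have h1 : (∑ v ∈ P, eccMatR T u v) ≤ (k:ℝ) * (ecc T u : ℝ) := by
        calc (∑ v ∈ P, eccMatR T u v) ≤ ∑ v ∈ P, (ecc T u : ℝ) :=
              Finset.sum_le_sum (fun v _ => eccMatR_le_ecc u v)
        _ = (k:ℝ) * (ecc T u : ℝ) := by rw [Finset.sum_const, nsmul_eq_mul]
      rw [h2, add_zero]; exact h1
  have hsum : (∑ u, ∑ v, eccMatR T u v) ≤
      (∑ u ∈ P, (((k:ℝ)-1) * (ecc T u : ℝ) + ((p:ℝ)-(k:ℝ)) * ((ecc T u : ℝ)-1))) +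
      (∑ u ∈ Q, (k:ℝ) * (ecc T u : ℝ)) := by
    calc (∑ u, ∑ v, eccMatR T u v)
        ≤ ∑ u, (if T.degree u = 1 then ((k:ℝ)-1) * (ecc T u : ℝ) + ((p:ℝ)-(k:ℝ)) * ((ecc T u : ℝ)-1)
            else (k:ℝ) * (ecc T u : ℝ)) := Finset.sum_le_sum (fun u _ => hrow u)
    _ = _ := by
        rw [← Finset.sum_filter_add_sum_filter_not Finset.univ (fun v => T.degree v = 1)]
        congr 1
        · exact Finset.sum_congr rfl (fun u hu => by
            rw [if_pos (by simpa [hPdef] using hu)])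
        · exact Finset.sum_congr rfl (fun u hu => by
            rw [hQdef, Finset.mem_filter] at hu; rw [if_neg hu.2])
  have hsum1 : (∑ u ∈ P, (((k:ℝ)-1) * (ecc T u : ℝ) + ((p:ℝ)-(k:ℝ)) * ((ecc T u : ℝ)-1)))
      = ((k:ℝ)-1) * S + ((p:ℝ)-(k:ℝ)) * (S - (k:ℝ)) := by
    rw [Finset.sum_add_distrib, ← Finset.mul_sum, ← Finset.mul_sum, Finset.sum_sub_distrib,
      Finset.sum_const, nsmul_eq_mul, mul_one, ← hS]
  have hsum2 : (∑ u ∈ Q, (k:ℝ) * (ecc T u : ℝ)) = (k:ℝ) * S' := by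
    rw [← Finset.mul_sum]
  -- key: (p-k-1)*S ≤ (p-k-1)*(k*d)
  have hfinal : ((p:ℝ)-(k:ℝ)-1) * S ≤ ((p:ℝ)-(k:ℝ)-1) * ((k:ℝ) * (d:ℝ)) := by
    by_cases hcase : k + 1 ≤ p
    · have hcoef : (0:ℝ) ≤ (p:ℝ)-(k:ℝ)-1 := by
        have : ((k:ℝ)) + 1 ≤ (p:ℝ) := by exact_mod_cast hcase
        linarith
      apply mul_le_mul_of_nonneg_left _ hcoef
      calc S ≤ ∑ u ∈ P, (d:ℝ) := Finset.sum_le_sum (fun u _ => by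
            exact_mod_cast ecc_le_diam T u)
      _ = (k:ℝ) * (d:ℝ) := by rw [Finset.sum_const, nsmul_eq_mul]
    · -- k = p, all leaves, so p = 2
      have hkeq : k = p := by omega
      have hPuniv : P = Finset.univ := Finset.eq_univ_of_card _ hkeq
      have hall : ∀ v : V, T.degree v = 1 := by
        intro v
        have : v ∈ P := hPuniv ▸ Finset.mem_univ v
        simpa [hPdef] using this
      have hdeg : ∑ v, T.degree v = 2 * T.edgeFinset.card :=
        T.sum_degrees_eq_twice_card_edges
      have hedge := ht.card_edgeFinset
      rw [← hp] at hedge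
      have hsumdeg : ∑ v, T.degree v = p := by
        rw [Finset.sum_congr rfl (fun v _ => hall v)]; simp [hp]
      have hp2 : p = 2 := by omega
      obtain ⟨x, y, hxy, hset⟩ := (Nat.card_eq_two_iff (α := V)).mp
        (by rw [Nat.card_eq_fintype_card, ← hp]; exact hp2)
      have huniv : (Finset.univ : Finset V) = {x, y} := by
        ext w
        simp only [Finset.mem_univ, true_iff, Finset.mem_insert, Finset.mem_singleton]
        have hw : w ∈ ({x, y} : Set V) := hset ▸ Set.mem_univ w
        simpa using hw
      have hex : ecc T x = T.dist x y := by
        rw [ecc, huniv, Finset.sup_insert, Finset.sup_singleton, SimpleGraph.dist_self]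
        simp
      have hey : ecc T y = T.dist x y := by
        rw [ecc, huniv, Finset.sup_insert, Finset.sup_singleton, SimpleGraph.dist_self,
          SimpleGraph.dist_comm]
        simp
      have hdval : d = T.dist x y := by
        rw [hd, graphDiam, huniv, Finset.sup_insert, Finset.sup_singleton, hex, hey]
        simp
      have hSval : S = 2 * (T.dist x y : ℝ) := by
        rw [hS, hPuniv, huniv, Finset.sum_pair hxy, hex, hey]; ring
      have hkd : (k:ℝ) * (d:ℝ) = 2 * (T.dist x y : ℝ) := by
        rw [hkeq, hp2, hdval]; norm_num
      rw [hSval, hkd]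
  rw [hE]
  calc (∑ u, ∑ v, eccMatR T u v)
      ≤ ((k:ℝ)-1) * S + ((p:ℝ)-(k:ℝ)) * (S - (k:ℝ)) + (k:ℝ) * S' := by
        rw [← hsum1, ← hsum2]; exact hsum
  _ ≤ (k:ℝ) * (S + S') + (d:ℝ) * (k:ℝ) * ((p:ℝ)-(k:ℝ)-1) - (k:ℝ)*((p:ℝ)-(k:ℝ)) := by
      nlinarith [hfinal]

lemma star_eq (ht : T.IsTree)
    (hiso : Nonempty (T ≃g completeBipartiteGraph (Fin 1) (Fin (Fintype.card V - 1)))) :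
    (∑ u, ∑ v, eccMatR T u v) =
      ((Finset.univ.filter (fun v : V => T.degree v = 1)).card : ℝ) * totalEcc T +
      (graphDiam T : ℝ) * ((Finset.univ.filter (fun v : V => T.degree v = 1)).card : ℝ) *
        ((Fintype.card V : ℝ) - ((Finset.univ.filter (fun v : V => T.degree v = 1)).card : ℝ) - 1) -
      ((Finset.univ.filter (fun v : V => T.degree v = 1)).card : ℝ) *
        ((Fintype.card V : ℝ) - ((Finset.univ.filter (fun v : V => T.degree v = 1)).card : ℝ)) := by
  classical
  obtain ⟨f⟩ := hiso
  have hconn := ht.isConnected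
  have hp1 : 1 ≤ Fintype.card V := by
    have : Nonempty V := hconn.nonempty
    exact Fintype.card_pos
  by_cases hp : Fintype.card V = 1
  · -- single vertex
    have hsub : ∀ u v : V, u = v := fun u v =>
      Fintype.card_le_one_iff.mp (by omega) u v
    have hdeg : ∀ v : V, T.degree v ≠ 1 := by
      intro v hv
      have h0 : T.neighborFinset v = ∅ := by
        ext w
        simp only [mem_neighborFinset, Finset.notMem_empty, iff_false]
        intro hadj
        exact T.loopless.irrefl v ((hsub v w) ▸ hadj)
      rw [SimpleGraph.degree, h0] at hv
      simp at hv
    have hP : (Finset.univ.filter (fun v : V => T.degree v = 1)) = ∅ := by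
      ext v; simp [hdeg v]
    have hL : (∑ u, ∑ v, eccMatR T u v) = 0 := by
      apply Finset.sum_eq_zero; intro u _
      apply Finset.sum_eq_zero; intro v _
      rw [hsub u v]; exact eccMatR_diag v
    rw [hL, hP]
    simp
  · -- p ≥ 2
    have hp2 : 2 ≤ Fintype.card V := by omega
    set c : V := f.symm (Sum.inl 0) with hc
    have hfc : f c = Sum.inl 0 := f.apply_symm_apply _
    have hfne : ∀ v : V, v ≠ c → ∃ b, f v = Sum.inr b := by
      intro v hv
      rcases hfv : f v with a | b
      · exfalso
        have : (a : Fin 1) = 0 := Subsingleton.elim _ _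
        apply hv
        have : f v = f c := by rw [hfv, hfc, this]
        exact f.injective this
      · exact ⟨b, rfl⟩
    have hadjc : ∀ v : V, v ≠ c → T.Adj c v := by
      intro v hv
      obtain ⟨b, hb⟩ := hfne v hv
      have : (completeBipartiteGraph (Fin 1) (Fin (Fintype.card V - 1))).Adj (f c) (f v) := by
        rw [hfc, hb]; simp
      exact f.map_adj_iff.mp this
    have hnadj : ∀ u v : V, u ≠ c → v ≠ c → ¬ T.Adj u v := by
      intro u v hu hv hadj
      obtain ⟨a, ha⟩ := hfne u hu
      obtain ⟨b, hb⟩ := hfne v hv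
      have : (completeBipartiteGraph (Fin 1) (Fin (Fintype.card V - 1))).Adj (f u) (f v) :=
        f.map_adj_iff.mpr hadj
      rw [ha, hb] at this
      simp at this
    have hdeg_leaf : ∀ v : V, v ≠ c → T.degree v = 1 := by
      intro v hv
      have h0 : T.neighborFinset v = {c} := by
        ext w
        simp only [mem_neighborFinset, Finset.mem_singleton]
        constructor
        · intro hadj
          by_contra hw
          exact hnadj v w hv hw hadj
        · intro hw; subst hw; exact (hadjc v hv).symm
      rw [SimpleGraph.degree, h0, Finset.card_singleton]
    have hnbhdc : T.neighborFinset c = Finset.univ.erase c := by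
      ext w
      simp only [mem_neighborFinset, Finset.mem_erase, Finset.mem_univ, and_true]
      constructor
      · intro hadj; exact fun hw => T.loopless.irrefl c (hw ▸ hadj)
      · intro hw; exact hadjc w hw
    have hdegc : T.degree c = Fintype.card V - 1 := by
      rw [SimpleGraph.degree, hnbhdc, Finset.card_erase_of_mem (Finset.mem_univ c),
        Finset.card_univ]
    have hdistc : ∀ v : V, v ≠ c → T.dist c v = 1 := fun v hv =>
      dist_eq_one_iff_adj.mpr (hadjc v hv)
    have hdistc' : ∀ v : V, v ≠ c → T.dist v c = 1 := fun v hv => by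
      rw [SimpleGraph.dist_comm]; exact hdistc v hv
    have hdist2 : ∀ u v : V, u ≠ c → v ≠ c → u ≠ v → T.dist u v = 2 := by
      intro u v hu hv huv
      have hle : T.dist u v ≤ 2 := by
        have hw : (Walk.cons (hadjc u hu).symm (Walk.cons (hadjc v hv) Walk.nil) : T.Walk u v).length = 2 := rfl
        calc T.dist u v ≤ _ := SimpleGraph.dist_le _
        _ = 2 := hw
      have hne0 : T.dist u v ≠ 0 := by
        have := hconn.pos_dist_of_ne huv; omega
      have hne1 : T.dist u v ≠ 1 := fun h1 => hnadj u v hu hv (dist_eq_one_iff_adj.mp h1)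
      omega
    by_cases hp3 : Fintype.card V = 2
    · -- exactly two vertices
      obtain ⟨w, hw⟩ := Fintype.exists_ne_of_one_lt_card (by omega) c
      have huniv : (Finset.univ : Finset V) = {c, w} := by
        symm
        apply Finset.eq_univ_of_card
        rw [Finset.card_insert_of_notMem (by simp [Ne.symm hw]), Finset.card_singleton, hp3]
      have heqcw : ∀ v : V, v = c ∨ v = w := by
        intro v
        have : v ∈ ({c, w} : Finset V) := huniv ▸ Finset.mem_univ v
        simpa using this
      have hdcw : T.dist c w = 1 := hdistc w hw
      have hecc : ecc T c = 1 := by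
        rw [ecc, huniv, Finset.sup_insert, Finset.sup_singleton, SimpleGraph.dist_self, hdcw]
        rfl
      have heccw : ecc T w = 1 := by
        rw [ecc, huniv, Finset.sup_insert, Finset.sup_singleton, SimpleGraph.dist_self,
          hdistc' w hw]
        simp
      have hdiam : graphDiam T = 1 := by
        rw [graphDiam, huniv, Finset.sup_insert, Finset.sup_singleton, hecc, heccw]
        simp
      have hdegcw : T.degree c = 1 := by rw [hdegc, hp3]
      have hPuniv : (Finset.univ.filter (fun v : V => T.degree v = 1)) = Finset.univ := by
        apply Finset.filter_true_of_mem
        intro v _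
        rcases heqcw v with rfl | rfl
        · exact hdegcw
        · exact hdeg_leaf _ hw
      have hE : totalEcc T = 2 := by
        rw [totalEcc, huniv, Finset.sum_pair (Ne.symm hw), hecc, heccw]; norm_num
      have hrowc : (∑ v ∈ ({c, w} : Finset V), eccMatR T c v) = 1 := by
        rw [Finset.sum_pair (Ne.symm hw), eccMatR_diag]
        have : eccMatR T c w = 1 := by
          unfold eccMatR
          rw [hdcw, hecc, heccw]
          norm_num
        rw [this]; norm_num
      have hroww : (∑ v ∈ ({c, w} : Finset V), eccMatR T w v) = 1 := by
        rw [Finset.sum_pair (Ne.symm hw), eccMatR_diag]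
        have : eccMatR T w c = 1 := by
          unfold eccMatR
          rw [hdistc' w hw, hecc, heccw]
          norm_num
        rw [this]; norm_num
      have hL : (∑ u, ∑ v, eccMatR T u v) = 2 := by
        rw [huniv, Finset.sum_pair (Ne.symm hw), hrowc, hroww]; norm_num
      rw [hL, hPuniv, hE, hdiam, Finset.card_univ, hp3]
      norm_num
    · -- p ≥ 3
      have hp3' : 3 ≤ Fintype.card V := by omega
      have hcleaf : T.degree c ≠ 1 := by rw [hdegc]; omega
      have hP : (Finset.univ.filter (fun v : V => T.degree v = 1)) = Finset.univ.erase c := by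
        ext v
        simp only [Finset.mem_filter, Finset.mem_univ, true_and, Finset.mem_erase, and_true]
        constructor
        · intro hv hvc; exact hcleaf (hvc ▸ hv)
        · exact fun hv => hdeg_leaf v hv
      have hk : (Finset.univ.filter (fun v : V => T.degree v = 1)).card = Fintype.card V - 1 := by
        rw [hP, Finset.card_erase_of_mem (Finset.mem_univ c), Finset.card_univ]
      -- eccentricities
      have heccc : ecc T c = 1 := by
        apply le_antisymm
        · apply Finset.sup_le
          intro v _
          by_cases hv : v = c
          · subst hv; simp [SimpleGraph.dist_self]
          · rw [hdistc v hv]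
        · obtain ⟨w, hw⟩ := Fintype.exists_ne_of_one_lt_card (by omega) c
          calc 1 = T.dist c w := (hdistc w hw).symm
          _ ≤ _ := dist_le_ecc T c w
      have heccl : ∀ u : V, u ≠ c → ecc T u = 2 := by
        intro u hu
        apply le_antisymm
        · apply Finset.sup_le
          intro v _
          by_cases hv : v = c
          · subst hv; rw [hdistc' u hu]; omega
          · by_cases huv : u = v
            · subst huv; simp [SimpleGraph.dist_self]
            · rw [hdist2 u v hu hv huv]
        · have : ¬ (Finset.univ : Finset V) ⊆ {u, c} := by
            intro hsub
            have := Finset.card_le_card hsub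
            have h2 : ({u, c} : Finset V).card ≤ 2 := Finset.card_insert_le _ _ |>.trans (by simp)
            rw [Finset.card_univ] at this
            omega
          obtain ⟨w, -, hw⟩ := Finset.not_subset.mp this
          simp only [Finset.mem_insert, Finset.mem_singleton, not_or] at hw
          calc 2 = T.dist u w := (hdist2 u w hu hw.2 (Ne.symm hw.1)).symm
          _ ≤ _ := dist_le_ecc T u w
      have hdiam : graphDiam T = 2 := by
        apply le_antisymm
        · apply Finset.sup_le
          intro v _
          by_cases hv : v = c
          · subst hv; rw [heccc]; omega
          · rw [heccl v hv]
        · obtain ⟨w, hw⟩ := Fintype.exists_ne_of_one_lt_card (by omega) c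
          calc 2 = ecc T w := (heccl w hw).symm
          _ ≤ _ := Finset.le_sup (Finset.mem_univ w)
      have hE : totalEcc T = 1 + 2 * ((Fintype.card V : ℝ) - 1) := by
        rw [totalEcc, ← Finset.add_sum_erase _ _ (Finset.mem_univ c), heccc]
        have h2 : ∀ v ∈ Finset.univ.erase c, ((ecc T v : ℕ) : ℝ) = 2 := by
          intro v hv
          rw [heccl v (Finset.mem_erase.mp hv).1]
          norm_num
        rw [Finset.sum_congr rfl h2, Finset.sum_const,
          Finset.card_erase_of_mem (Finset.mem_univ c), Finset.card_univ, nsmul_eq_mul,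
          Nat.cast_sub hp1]
        push_cast
        ring
      -- entries
      have hentry_cv : ∀ v : V, v ≠ c → eccMatR T c v = 1 := by
        intro v hv
        unfold eccMatR
        rw [hdistc v hv, heccc, heccl v hv]
        norm_num
      have hentry_vc : ∀ v : V, v ≠ c → eccMatR T v c = 1 := by
        intro v hv
        unfold eccMatR
        rw [hdistc' v hv, heccc, heccl v hv]
        norm_num
      have hentry_uv : ∀ u v : V, u ≠ c → v ≠ c → u ≠ v → eccMatR T u v = 2 := by
        intro u v hu hv huv
        unfold eccMatR
        rw [hdist2 u v hu hv huv, heccl u hu, heccl v hv]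
        norm_num
      have hrowc : (∑ v, eccMatR T c v) = (Fintype.card V : ℝ) - 1 := by
        rw [← Finset.add_sum_erase _ _ (Finset.mem_univ c), eccMatR_diag, zero_add]
        have h2 : ∀ v ∈ Finset.univ.erase c, eccMatR T c v = 1 := fun v hv =>
          hentry_cv v (Finset.mem_erase.mp hv).1
        rw [Finset.sum_congr rfl h2, Finset.sum_const,
          Finset.card_erase_of_mem (Finset.mem_univ c), Finset.card_univ, nsmul_eq_mul,
          Nat.cast_sub hp1]
        push_cast
        ring
      have hrowu : ∀ u : V, u ≠ c → (∑ v, eccMatR T u v) = 1 + 2 * ((Fintype.card V : ℝ) - 2) := by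
        intro u hu
        rw [← Finset.add_sum_erase _ _ (Finset.mem_univ c), hentry_vc u hu]
        have huerase : u ∈ Finset.univ.erase c := Finset.mem_erase.mpr ⟨hu, Finset.mem_univ u⟩
        rw [← Finset.add_sum_erase _ _ huerase, eccMatR_diag, zero_add]
        have h2 : ∀ v ∈ (Finset.univ.erase c).erase u, eccMatR T u v = 2 := by
          intro v hv
          obtain ⟨hvu, hv2⟩ := Finset.mem_erase.mp hv
          exact hentry_uv u v hu (Finset.mem_erase.mp hv2).1 (Ne.symm hvu)
        rw [Finset.sum_congr rfl h2, Finset.sum_const, Finset.card_erase_of_mem huerase,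
          Finset.card_erase_of_mem (Finset.mem_univ c), Finset.card_univ, nsmul_eq_mul]
        have : ((Fintype.card V - 1 - 1 : ℕ) : ℝ) = (Fintype.card V : ℝ) - 2 := by
          have : ((Fintype.card V - 1 - 1 : ℕ) : ℝ) = ((Fintype.card V : ℕ) : ℝ) - 1 - 1 := by
            rw [Nat.cast_sub (by omega), Nat.cast_sub hp1]
            norm_num
          rw [this]; ring
        rw [this]
        ring
      have hL : (∑ u, ∑ v, eccMatR T u v)
          = ((Fintype.card V : ℝ) - 1) + ((Fintype.card V : ℝ) - 1) * (1 + 2 * ((Fintype.card V : ℝ) - 2)) := by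
        rw [← Finset.add_sum_erase _ _ (Finset.mem_univ c), hrowc]
        congr 1
        have h2 : ∀ u ∈ Finset.univ.erase c, (∑ v, eccMatR T u v)
            = 1 + 2 * ((Fintype.card V : ℝ) - 2) := fun u hu =>
          hrowu u (Finset.mem_erase.mp hu).1
        rw [Finset.sum_congr rfl h2, Finset.sum_const,
          Finset.card_erase_of_mem (Finset.mem_univ c), Finset.card_univ, nsmul_eq_mul,
          Nat.cast_sub hp1]
        push_cast
        ring
      have hkcast : ((Finset.univ.filter (fun v : V => T.degree v = 1)).card : ℝ)
          = (Fintype.card V : ℝ) - 1 := by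
        rw [hk, Nat.cast_sub hp1]
        norm_num
      rw [hL, hkcast, hE, hdiam]
      push_cast
      ring

end Aux

/-- for a tree with k pendant vertices and diameter d,
2W_ε(T) ≤ k ε*(T) + d k (p-k-1) - k(p-k), with equality if T is the star. -/
theorem stmt_12 {V : Type*} [Fintype V] [DecidableEq V] (T : SimpleGraph V) [DecidableRel T.Adj]
    (ht : T.IsTree) :
    (2 * eccWiener T ≤
      ((Finset.univ.filter (fun v : V => T.degree v = 1)).card : ℝ) * totalEcc T +
      (graphDiam T : ℝ) * ((Finset.univ.filter (fun v : V => T.degree v = 1)).card : ℝ) *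
        ((Fintype.card V : ℝ) - ((Finset.univ.filter (fun v : V => T.degree v = 1)).card : ℝ) - 1) -
      ((Finset.univ.filter (fun v : V => T.degree v = 1)).card : ℝ) *
        ((Fintype.card V : ℝ) - ((Finset.univ.filter (fun v : V => T.degree v = 1)).card : ℝ))) ∧
    (Nonempty (T ≃g completeBipartiteGraph (Fin 1) (Fin (Fintype.card V - 1))) →
      2 * eccWiener T =
      ((Finset.univ.filter (fun v : V => T.degree v = 1)).card : ℝ) * totalEcc T +
      (graphDiam T : ℝ) * ((Finset.univ.filter (fun v : V => T.degree v = 1)).card : ℝ) *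
        ((Fintype.card V : ℝ) - ((Finset.univ.filter (fun v : V => T.degree v = 1)).card : ℝ) - 1) -
      ((Finset.univ.filter (fun v : V => T.degree v = 1)).card : ℝ) *
        ((Fintype.card V : ℝ) - ((Finset.univ.filter (fun v : V => T.degree v = 1)).card : ℝ))) := by
  constructor
  · have h2 : 2 * eccWiener T = ∑ u, ∑ v, eccMatR T u v := by rw [eccWiener]; ring
    rw [h2]
    exact main_ineq ht
  · intro hiso
    have h2 : 2 * eccWiener T = ∑ u, ∑ v, eccMatR T u v := by rw [eccWiener]; ring
    rw [h2]
    exact star_eq ht hiso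
end EccPaper
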